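/- In int-semantics, the composition scheme [φ][ψ]χ ↔ [int(φ) ∧ [φ]int(ψ)]χ is valid. In particular, int[[int(φ) ∧ [φ]int(ψ)]]^U = int([[ψ]]^{int[[φ]]^U}). -/
import Mathlib


/-- Formulas of the public announcement language PAL (with the `int` modality). -/
inductive Form : Type
  | atom : ℕ → Form
  | neg : Form → Form
  | and : Form → Form → Form
  | K : Form → Form
  | int : Form → Form
  | ann : Form → Form → Form

/-- Material implication, defined classically. -/
def Form.imp (φ ψ : Form) : Form := .neg (.and φ (.neg ψ))

/-- Int-semantics for PAL on a topological subset model with valuation `v`. -/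
def sat {α : Type*} [TopologicalSpace α] (v : ℕ → Set α) : Form → α → Set α → Prop
  | .atom n, x, _ => x ∈ v n
  | .neg φ, x, U => ¬ sat v φ x U
  | .and φ ψ, x, U => sat v φ x U ∧ sat v ψ x U
  | .K φ, x, U => ∀ y ∈ U, sat v φ y U
  | .int φ, x, U => x ∈ interior {y ∈ U | sat v φ y U}
  | .ann φ ψ, x, U =>
      x ∈ interior {y ∈ U | sat v φ y U} → sat v ψ x (interior {y ∈ U | sat v φ y U})

/-- Composition scheme: `[φ][ψ]χ ↔ [int(φ) ∧ [φ]int(ψ)]χ` is valid in int-semantics;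
in particular `int [[int(φ) ∧ [φ]int(ψ)]]^U = int ([[ψ]]^(int [[φ]]^U))`. -/
theorem reduction_composition {α : Type*} [TopologicalSpace α] (v : ℕ → Set α) (φ ψ χ : Form)
    (x : α) (U : Set α) (hx : x ∈ U) (hU : IsOpen U) :
    (sat v (.ann φ (.ann ψ χ)) x U ↔
      sat v (.ann ((Form.int φ).and (.ann φ (.int ψ))) χ) x U) ∧
    interior {y ∈ U | sat v ((Form.int φ).and (.ann φ (.int ψ))) y U} =
      interior {y ∈ interior {z ∈ U | sat v φ z U} |
        sat v ψ y (interior {z ∈ U | sat v φ z U})} := by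
  set V : Set α := interior {z ∈ U | sat v φ z U} with hV
  have hVU : V ⊆ U := interior_subset.trans (fun y hy => hy.1)
  set S : Set α := {w ∈ V | sat v ψ w V} with hS
  have hSV : interior S ⊆ V := interior_subset.trans (fun y hy => hy.1)
  have hset : {y | y ∈ U ∧ y ∈ V ∧ (y ∈ V → y ∈ interior S)} = interior S := by
    ext y
    simp only [Set.mem_setOf_eq]
    constructor
    · rintro ⟨_, hyV, h⟩
      exact h hyV
    · intro h
      exact ⟨hVU (hSV h), hSV h, fun _ => h⟩
  constructor
  · simp only [sat, ← hV, ← hS]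
    rw [hset, interior_interior]
    constructor
    · intro h hx2
      exact h (hSV hx2) hx2
    · intro h _ hx2
      exact h hx2
  · have : {y ∈ U | sat v ((Form.int φ).and (.ann φ (.int ψ))) y U} =
        {y | y ∈ U ∧ y ∈ V ∧ (y ∈ V → y ∈ interior S)} := by
      ext y; simp only [Set.mem_setOf_eq, sat, ← hV, ← hS]
    rw [this, hset, interior_interior]
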